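/- Let M be a Garside monoid with atom set S. The quasi-centralizer QZ(M) = {g in M : gM = Mg} is a free commutative monoid, with the set {τ_s : s in S} (with repetitions removed) as a free basis, where τ_s is the smallest quasi-central element left-divisible by the atom s. -/

import Mathlib

/-- Left-divisibility in a monoid. -/
def LeftDvd {M : Type*} [Monoid M] (a b : M) : Prop := ∃ c, b = a * c

/-- Right-divisibility in a monoid. -/
def GRightDvd {M : Type*} [Monoid M] (a b : M) : Prop := ∃ c, b = c * a

/-- An element `g` of a monoid is quasi-central if `gM = Mg` as sets. -/
def QuasiCentral {M : Type*} [Monoid M] (g : M) : Prop :=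
  ∀ x : M, (∃ m, x = g * m) ↔ (∃ m, x = m * g)

/-- An atom of a monoid: a non-identity element that is not a product of two
non-identity elements. -/
def MonAtom {M : Type*} [Monoid M] (a : M) : Prop :=
  a ≠ 1 ∧ ∀ b c : M, a = b * c → b = 1 ∨ c = 1

/-- A Garside-monoid structure on a monoid `M`: `M` is cancellative, noetherian
for the factor relation, its left- and right-divisibility orders are lattices,
and it has a quasi-central Garside element `Δ` whose powers are left-divisible
by every element. -/
structure GarsideStruct (M : Type*) [Monoid M] where
  cancel_left : ∀ a b c : M, a * b = a * c → b = c
  cancel_right : ∀ a b c : M, b * a = c * a → b = c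
  wf : WellFounded (fun w w' : M => (∃ w1 w2, w' = w1 * w * w2) ∧ w ≠ w')
  lcmL : M → M → M
  lcmL_left : ∀ a b, LeftDvd a (lcmL a b)
  lcmL_right : ∀ a b, LeftDvd b (lcmL a b)
  lcmL_min : ∀ a b k, LeftDvd a k → LeftDvd b k → LeftDvd (lcmL a b) k
  gcdL : M → M → M
  gcdL_left : ∀ a b, LeftDvd (gcdL a b) a
  gcdL_right : ∀ a b, LeftDvd (gcdL a b) b
  gcdL_max : ∀ a b k, LeftDvd k a → LeftDvd k b → LeftDvd k (gcdL a b)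
  lcmR : M → M → M
  lcmR_left : ∀ a b, GRightDvd a (lcmR a b)
  lcmR_right : ∀ a b, GRightDvd b (lcmR a b)
  lcmR_min : ∀ a b k, GRightDvd a k → GRightDvd b k → GRightDvd (lcmR a b) k
  gcdR : M → M → M
  gcdR_left : ∀ a b, GRightDvd (gcdR a b) a
  gcdR_right : ∀ a b, GRightDvd (gcdR a b) b
  gcdR_max : ∀ a b k, GRightDvd k a → GRightDvd k b → GRightDvd k (gcdR a b)
  delta : M
  delta_qc : QuasiCentral delta
  delta_pow : ∀ g : M, ∃ n : ℕ, LeftDvd g (delta ^ n)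

namespace Stmt8Aux

lemma no_cycle {α : Sort*} {r : α → α → Prop} (h : WellFounded r) {a b : α}
    (hab : r a b) (hba : r b a) : False := by
  have H : ∀ x : α, ∀ y, r x y → r y x → False := by
    intro x
    refine WellFounded.induction h (C := fun x => ∀ y, r x y → r y x → False) x ?_
    intro x ih y hxy hyx
    exact ih y hyx x hyx hxy
  exact H a b hab hba

variable {M : Type*} [Monoid M]

lemma sandwich (GS : GarsideStruct M) {u x v : M} (h : x = u * x * v) : u = 1 ∧ v = 1 := by
  by_cases hu : u * x = x
  · have hu1 : u = 1 := GS.cancel_right x u 1 (by simpa using hu)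
    subst hu1
    simp only [one_mul] at h
    exact ⟨rfl, GS.cancel_left x v 1 (by simpa using h.symm)⟩
  · exfalso
    exact no_cycle GS.wf (a := x) (b := u * x)
      ⟨⟨u, 1, (mul_one (u * x)).symm⟩, fun e => hu e.symm⟩
      ⟨⟨1, v, by rw [one_mul]; exact h⟩, fun e => hu e⟩

lemma mul_one_eq (GS : GarsideStruct M) {a b : M} (h : a * b = 1) : a = 1 ∧ b = 1 := by
  have : (1 : M) = a * 1 * b := by rw [mul_one]; exact h.symm
  exact sandwich GS this

lemma leftdvd_antisymm (GS : GarsideStruct M) {a b : M}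
    (h1 : LeftDvd a b) (h2 : LeftDvd b a) : a = b := by
  obtain ⟨c, hc⟩ := h1
  obtain ⟨d, hd⟩ := h2
  have hx : a = 1 * a * (c * d) := by
    rw [one_mul, ← mul_assoc, ← hc, ← hd]
  have hcd := (sandwich GS hx).2
  have hc1 : c = 1 := (mul_one_eq GS hcd).1
  rw [hc, hc1, mul_one]

lemma rightdvd_antisymm (GS : GarsideStruct M) {a b : M}
    (h1 : GRightDvd a b) (h2 : GRightDvd b a) : a = b := by
  obtain ⟨c, hc⟩ := h1   -- b = c * a
  obtain ⟨d, hd⟩ := h2   -- a = d * b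
  have hx : a = (d * c) * a * 1 := by
    rw [mul_one, mul_assoc, ← hc, ← hd]
  have hdc := (sandwich GS hx).1
  have hd1 : d = 1 := (mul_one_eq GS hdc).1
  rw [hd, hd1, one_mul]

lemma leftdvd_trans {a b c : M} (h1 : LeftDvd a b) (h2 : LeftDvd b c) : LeftDvd a c := by
  obtain ⟨x, hx⟩ := h1; obtain ⟨y, hy⟩ := h2
  exact ⟨x * y, by rw [hy, hx, mul_assoc]⟩

lemma rightdvd_trans {a b c : M} (h1 : GRightDvd a b) (h2 : GRightDvd b c) : GRightDvd a c := by
  obtain ⟨x, hx⟩ := h1; obtain ⟨y, hy⟩ := h2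
  exact ⟨y * x, by rw [hy, hx, mul_assoc]⟩

lemma exists_atom (GS : GarsideStruct M) : ∀ g : M, g ≠ 1 → ∃ s, MonAtom s ∧ LeftDvd s g := by
  intro g
  refine WellFounded.induction GS.wf
    (C := fun g => g ≠ 1 → ∃ s, MonAtom s ∧ LeftDvd s g) g ?_
  intro g ih hg
  by_cases ha : MonAtom g
  · exact ⟨g, ha, 1, (mul_one g).symm⟩
  · rw [MonAtom] at ha
    push_neg at ha
    obtain ⟨b, c, hbc, hb, hc⟩ := ha hg
    have hbg : b ≠ g := by
      intro h
      rw [h] at hbc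
      exact hc (GS.cancel_left g c 1 (by rw [mul_one]; exact hbc.symm))
    have hrel : (∃ w1 w2, g = w1 * b * w2) ∧ b ≠ g := ⟨⟨1, c, by rw [one_mul]; exact hbc⟩, hbg⟩
    obtain ⟨s, hs, hsb⟩ := ih b hrel hb
    exact ⟨s, hs, leftdvd_trans hsb ⟨c, hbc⟩⟩

lemma qc_lr {g : M} (hg : QuasiCentral g) (m : M) : ∃ m', g * m = m' * g :=
  (hg (g * m)).1 ⟨m, rfl⟩

lemma qc_rl {g : M} (hg : QuasiCentral g) (m : M) : ∃ m', m * g = g * m' :=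
  (hg (m * g)).2 ⟨m, rfl⟩

lemma qc_one : QuasiCentral (1 : M) := by
  intro x; constructor
  · rintro ⟨m, rfl⟩; exact ⟨m, by rw [one_mul, mul_one]⟩
  · rintro ⟨m, rfl⟩; exact ⟨m, by rw [one_mul, mul_one]⟩

lemma qc_mul {a b : M} (ha : QuasiCentral a) (hb : QuasiCentral b) :
    QuasiCentral (a * b) := by
  intro x; constructor
  · rintro ⟨m, rfl⟩
    obtain ⟨m1, h1⟩ := qc_lr hb m
    obtain ⟨m2, h2⟩ := qc_lr ha m1
    refine ⟨m2, ?_⟩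
    calc a * b * m = a * (b * m) := mul_assoc ..
      _ = a * (m1 * b) := by rw [h1]
      _ = a * m1 * b := (mul_assoc ..).symm
      _ = m2 * a * b := by rw [h2]
      _ = m2 * (a * b) := mul_assoc ..
  · rintro ⟨m, rfl⟩
    obtain ⟨m1, h1⟩ := qc_rl ha m
    obtain ⟨m2, h2⟩ := qc_rl hb m1
    refine ⟨m2, ?_⟩
    calc m * (a * b) = m * a * b := (mul_assoc ..).symm
      _ = a * m1 * b := by rw [h1]
      _ = a * (m1 * b) := mul_assoc ..
      _ = a * (b * m2) := by rw [h2]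
      _ = a * b * m2 := (mul_assoc ..).symm

/-- quotient of a QC element by a QC left divisor is QC -/
lemma qcL (GS : GarsideStruct M) {a b c : M} (ha : QuasiCentral a) (hb : QuasiCentral b)
    (hab : b = a * c) : QuasiCentral c := by
  intro x; constructor
  · rintro ⟨m, rfl⟩
    obtain ⟨m1, h1⟩ := qc_lr hb m
    obtain ⟨m2, h2⟩ := qc_rl ha m1
    refine ⟨m2, GS.cancel_left a _ _ ?_⟩
    calc a * (c * m) = a * c * m := (mul_assoc ..).symm
      _ = b * m := by rw [hab]
      _ = m1 * b := h1
      _ = m1 * (a * c) := by rw [hab]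
      _ = m1 * a * c := (mul_assoc ..).symm
      _ = a * m2 * c := by rw [h2]
      _ = a * (m2 * c) := mul_assoc ..
  · rintro ⟨m, rfl⟩
    obtain ⟨n, hn⟩ := qc_lr ha m
    obtain ⟨k, hk⟩ := qc_rl hb n
    refine ⟨k, GS.cancel_left a _ _ ?_⟩
    calc a * (m * c) = a * m * c := (mul_assoc ..).symm
      _ = n * a * c := by rw [hn]
      _ = n * b := by rw [hab, mul_assoc]
      _ = b * k := hk
      _ = a * c * k := by rw [hab]
      _ = a * (c * k) := mul_assoc ..

/-- quotient of a QC element by a QC right divisor is QC -/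
lemma qcR (GS : GarsideStruct M) {a b c : M} (ha : QuasiCentral a) (hb : QuasiCentral b)
    (hab : b = c * a) : QuasiCentral c := by
  intro x; constructor
  · rintro ⟨m, rfl⟩
    obtain ⟨m1, h1⟩ := qc_rl ha m
    obtain ⟨m2, h2⟩ := qc_lr hb m1
    refine ⟨m2, GS.cancel_right a _ _ ?_⟩
    calc c * m * a = c * (m * a) := mul_assoc ..
      _ = c * (a * m1) := by rw [h1]
      _ = c * a * m1 := (mul_assoc ..).symm
      _ = b * m1 := by rw [hab]
      _ = m2 * b := h2
      _ = m2 * (c * a) := by rw [hab]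
      _ = m2 * c * a := (mul_assoc ..).symm
  · rintro ⟨m, rfl⟩
    obtain ⟨k1, h1⟩ := qc_rl hb m
    obtain ⟨k2, h2⟩ := qc_lr ha k1
    refine ⟨k2, GS.cancel_right a _ _ ?_⟩
    calc m * c * a = m * (c * a) := mul_assoc ..
      _ = m * b := by rw [hab]
      _ = b * k1 := h1
      _ = c * a * k1 := by rw [hab]
      _ = c * (a * k1) := mul_assoc ..
      _ = c * (k2 * a) := by rw [h2]
      _ = c * k2 * a := (mul_assoc ..).symm

/-- for a QC element, left divisors are right divisors -/
lemma qc_ltr (GS : GarsideStruct M) {g x : M} (hg : QuasiCentral g)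
    (h : LeftDvd x g) : GRightDvd x g := by
  obtain ⟨y, hy⟩ := h
  obtain ⟨m, hm⟩ := qc_lr hg y
  refine ⟨m, ?_⟩
  have key : (x * y) * y = (m * x) * y := by
    calc x * y * y = g * y := by rw [← hy]
      _ = m * g := hm
      _ = m * (x * y) := by rw [hy]
      _ = m * x * y := (mul_assoc ..).symm
  have := GS.cancel_right y (x * y) (m * x) key
  rw [hy, this]

/-- for a QC element, right divisors are left divisors -/
lemma qc_rtl (GS : GarsideStruct M) {g x : M} (hg : QuasiCentral g)
    (h : GRightDvd x g) : LeftDvd x g := by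
  obtain ⟨y, hy⟩ := h   -- g = y * x
  obtain ⟨m, hm⟩ := qc_rl hg y   -- y * g = g * m
  refine ⟨m, ?_⟩
  have key : y * (y * x) = y * (x * m) := by
    calc y * (y * x) = y * g := by rw [← hy]
      _ = g * m := hm
      _ = y * x * m := by rw [hy]
      _ = y * (x * m) := mul_assoc ..
  have := GS.cancel_left y (y * x) (x * m) key
  rw [hy, this]

lemma lcm_qc_eq_lcmR (GS : GarsideStruct M) {a b : M}
    (ha : QuasiCentral a) (hb : QuasiCentral b) : GS.lcmL a b = GS.lcmR a b := by
  have hRL : GRightDvd (GS.lcmR a b) (GS.lcmL a b) := by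
    apply GS.lcmR_min
    · obtain ⟨x, hx⟩ := GS.lcmL_left a b
      obtain ⟨m, hm⟩ := qc_lr ha x
      exact ⟨m, by rw [hx, hm]⟩
    · obtain ⟨x, hx⟩ := GS.lcmL_right a b
      obtain ⟨m, hm⟩ := qc_lr hb x
      exact ⟨m, by rw [hx, hm]⟩
  have hLR : LeftDvd (GS.lcmL a b) (GS.lcmR a b) := by
    apply GS.lcmL_min
    · obtain ⟨x, hx⟩ := GS.lcmR_left a b
      obtain ⟨m, hm⟩ := qc_rl ha x
      exact ⟨m, by rw [hx, hm]⟩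
    · obtain ⟨x, hx⟩ := GS.lcmR_right a b
      obtain ⟨m, hm⟩ := qc_rl hb x
      exact ⟨m, by rw [hx, hm]⟩
  obtain ⟨c, hc⟩ := hLR   -- R = L * c
  obtain ⟨d, hd⟩ := hRL   -- L = d * R
  have hx : GS.lcmL a b = d * GS.lcmL a b * c := by
    rw [mul_assoc, ← hc]; exact hd
  have := sandwich GS hx
  rw [hc, this.2, mul_one]

lemma qc_lcm (GS : GarsideStruct M) {a b : M}
    (ha : QuasiCentral a) (hb : QuasiCentral b) : QuasiCentral (GS.lcmL a b) := by
  have hLR := lcm_qc_eq_lcmR GS ha hb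
  intro x; constructor
  · rintro ⟨m, rfl⟩
    have haR : GRightDvd a (GS.lcmL a b * m) := by
      obtain ⟨n, hn⟩ : GRightDvd a (GS.lcmL a b) := by rw [hLR]; exact GS.lcmR_left a b
      obtain ⟨m2, hm2⟩ := qc_lr ha m
      refine ⟨n * m2, ?_⟩
      calc GS.lcmL a b * m = n * a * m := by rw [hn]
        _ = n * (a * m) := mul_assoc ..
        _ = n * (m2 * a) := by rw [hm2]
        _ = n * m2 * a := (mul_assoc ..).symm
    have hbR : GRightDvd b (GS.lcmL a b * m) := by
      obtain ⟨n, hn⟩ : GRightDvd b (GS.lcmL a b) := by rw [hLR]; exact GS.lcmR_right a b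
      obtain ⟨m2, hm2⟩ := qc_lr hb m
      refine ⟨n * m2, ?_⟩
      calc GS.lcmL a b * m = n * b * m := by rw [hn]
        _ = n * (b * m) := mul_assoc ..
        _ = n * (m2 * b) := by rw [hm2]
        _ = n * m2 * b := (mul_assoc ..).symm
    have := GS.lcmR_min a b _ haR hbR
    rw [← hLR] at this
    obtain ⟨k, hk⟩ := this
    exact ⟨k, hk⟩
  · rintro ⟨m, rfl⟩
    have haL : LeftDvd a (m * GS.lcmL a b) := by
      obtain ⟨n, hn⟩ := GS.lcmL_left a b
      obtain ⟨m1, hm1⟩ := qc_rl ha m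
      refine ⟨m1 * n, ?_⟩
      calc m * GS.lcmL a b = m * (a * n) := by rw [hn]
        _ = m * a * n := (mul_assoc ..).symm
        _ = a * m1 * n := by rw [hm1]
        _ = a * (m1 * n) := mul_assoc ..
    have hbL : LeftDvd b (m * GS.lcmL a b) := by
      obtain ⟨n, hn⟩ := GS.lcmL_right a b
      obtain ⟨m1, hm1⟩ := qc_rl hb m
      refine ⟨m1 * n, ?_⟩
      calc m * GS.lcmL a b = m * (b * n) := by rw [hn]
        _ = m * b * n := (mul_assoc ..).symm
        _ = b * m1 * n := by rw [hm1]
        _ = b * (m1 * n) := mul_assoc ..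
    obtain ⟨k, hk⟩ := GS.lcmL_min a b _ haL hbL
    exact ⟨k, hk⟩

section Tau

set_option linter.unusedSectionVars false

variable (GS : GarsideStruct M) (τ : M → M)
variable (hτqc : ∀ g, QuasiCentral (τ g))
variable (hτdvd : ∀ g, LeftDvd g (τ g))
variable (hτmin : ∀ g h, QuasiCentral h → LeftDvd g h → LeftDvd (τ g) h)

include GS hτqc hτdvd hτmin

lemma tau_ne_one {s : M} (hs : s ≠ 1) : τ s ≠ 1 := by
  intro h
  obtain ⟨c, hc⟩ := hτdvd s
  rw [h] at hc
  exact hs (mul_one_eq GS hc.symm).1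

/-- shift lemma: τ(h·g) = h·τ(g) for quasi-central h -/
lemma tau_shift_left {h g : M} (hh : QuasiCentral h) : τ (h * g) = h * τ g := by
  have h1 : LeftDvd h (τ (h * g)) := by
    obtain ⟨c, hc⟩ := hτdvd (h * g)
    exact ⟨g * c, by rw [hc, mul_assoc]⟩
  obtain ⟨w, hw⟩ := h1
  have hwqc : QuasiCentral w := qcL GS hh (hτqc (h * g)) hw
  have hgw : LeftDvd g w := by
    obtain ⟨r, hr⟩ := hτdvd (h * g)
    refine ⟨r, GS.cancel_left h _ _ ?_⟩
    rw [← hw, hr, mul_assoc]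
  obtain ⟨r', hr'⟩ := hτmin g w hwqc hgw
  have h2 : LeftDvd (h * τ g) (τ (h * g)) := by
    refine ⟨r', ?_⟩
    rw [hw, hr', ← mul_assoc]
  have h3 : LeftDvd (τ (h * g)) (h * τ g) := by
    apply hτmin
    · exact qc_mul hh (hτqc g)
    · obtain ⟨c, hc⟩ := hτdvd g
      exact ⟨c, by rw [hc, mul_assoc]⟩
  exact leftdvd_antisymm GS h3 h2

lemma tau_dvd_r (g : M) : GRightDvd g (τ g) :=
  qc_ltr GS (hτqc g) (hτdvd g)

lemma tau_min_r {g q : M} (hq : QuasiCentral q)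
    (hr : GRightDvd g q) : GRightDvd (τ g) q :=
  qc_ltr GS hq (hτmin g q hq (qc_rtl GS hq hr))

/-- shift lemma: τ(g·h) = τ(g)·h for quasi-central h -/
lemma tau_shift_right {g h : M} (hh : QuasiCentral h) : τ (g * h) = τ g * h := by
  have h1 : GRightDvd h (τ (g * h)) := by
    obtain ⟨r, hr⟩ := tau_dvd_r GS τ hτqc hτdvd hτmin (g * h)
    exact ⟨r * g, by rw [hr, mul_assoc]⟩
  obtain ⟨w, hw⟩ := h1   -- τ(g*h) = w * h
  have hwqc : QuasiCentral w := qcR GS hh (hτqc (g * h)) hw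
  have hgw : GRightDvd g w := by
    obtain ⟨r, hr⟩ := tau_dvd_r GS τ hτqc hτdvd hτmin (g * h)  -- τ(g*h) = r * (g*h)
    refine ⟨r, GS.cancel_right h _ _ ?_⟩
    rw [← hw, hr, mul_assoc]
  obtain ⟨r', hr'⟩ := tau_min_r GS τ hτqc hτdvd hτmin hwqc hgw   -- w = r' * τ g
  have h2 : GRightDvd (τ g * h) (τ (g * h)) := by
    refine ⟨r', ?_⟩
    rw [hw, hr', mul_assoc]
  have h3 : GRightDvd (τ (g * h)) (τ g * h) := by
    apply tau_min_r GS τ hτqc hτdvd hτmin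
    · exact qc_mul (hτqc g) hh
    · obtain ⟨m, hm⟩ := tau_dvd_r GS τ hτqc hτdvd hτmin g   -- τ g = m * g
      exact ⟨m, by rw [hm, mul_assoc]⟩
  exact rightdvd_antisymm GS h3 h2

/-- conjugation: if x·h = h·x₁ with h QC, then τ(x)·h = h·τ(x₁) -/
lemma tau_conj {h x x₁ : M} (hh : QuasiCentral h) (he : x * h = h * x₁) :
    τ x * h = h * τ x₁ := by
  rw [← tau_shift_right GS τ hτqc hτdvd hτmin hh, he,
    tau_shift_left GS τ hτqc hτdvd hτmin hh]

/-- τ t is an atom of the quasi-centralizer -/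
lemma tau_atom_min {t : M} (ht : MonAtom t) {d : M} (hd : QuasiCentral d)
    (hd1 : d ≠ 1) (hdvd : LeftDvd d (τ t)) : d = τ t := by
  by_cases hcase : LeftDvd t d
  · exact leftdvd_antisymm GS hdvd (hτmin t d hd hcase)
  · exfalso
    obtain ⟨t₁, ht₁⟩ := qc_rl hd t   -- t * d = d * t₁
    have ht₁ne : t₁ ≠ 1 := by
      intro h1
      rw [h1, mul_one] at ht₁
      exact ht.1 (GS.cancel_right d t 1 (by rw [one_mul]; exact ht₁))
    have ht₁atom : MonAtom t₁ := by
      refine ⟨ht₁ne, ?_⟩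
      intro u v huv
      obtain ⟨u', hu'⟩ := qc_lr hd u
      obtain ⟨v', hv'⟩ := qc_lr hd v
      have key : t * d = (u' * v') * d := by
        calc t * d = d * t₁ := ht₁
          _ = d * (u * v) := by rw [huv]
          _ = d * u * v := (mul_assoc ..).symm
          _ = u' * d * v := by rw [hu']
          _ = u' * (d * v) := mul_assoc ..
          _ = u' * (v' * d) := by rw [hv']
          _ = u' * v' * d := (mul_assoc ..).symm
      rcases ht.2 u' v' (GS.cancel_right d t (u' * v') key) with h | h
      · left
        apply GS.cancel_left d u 1
        rw [hu', h, one_mul, mul_one]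
      · right
        apply GS.cancel_left d v 1
        rw [hv', h, one_mul, mul_one]
    obtain ⟨u, hu⟩ := GS.lcmL_right t d   -- lcm = d * u
    obtain ⟨r, hr⟩ := GS.lcmL_min t d (t * d) ⟨d, rfl⟩ ⟨t₁, ht₁⟩   -- t*d = lcm * r
    have hur : t₁ = u * r := by
      apply GS.cancel_left d
      rw [← mul_assoc, ← hu, ← hr]
      exact ht₁.symm
    rcases ht₁atom.2 u r hur with h | h
    · apply hcase
      obtain ⟨c, hc⟩ := GS.lcmL_left t d   -- lcm = t * c
      refine ⟨c, ?_⟩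
      rw [← hc, hu, h, mul_one]
    · -- r = 1, so lcm t d = t*d = d*t₁
      have hlcm : GS.lcmL t d = d * t₁ := by rw [← ht₁, hr, h, mul_one]
      obtain ⟨e', he'⟩ := GS.lcmL_min t d (τ t) (hτdvd t) hdvd   -- τ t = lcm * e'
      have hτt : τ t = d * (t₁ * e') := by rw [he', hlcm, mul_assoc]
      have heqc : QuasiCentral (t₁ * e') := qcL GS hd (hτqc t) hτt
      obtain ⟨f, hf⟩ := hτmin t₁ (t₁ * e') heqc ⟨e', rfl⟩   -- t₁ * e' = τ t₁ * f
      have hS3 : τ t * d = d * τ t₁ :=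
        tau_conj GS τ hτqc hτdvd hτmin hd ht₁
      have hkey : τ t = τ t * (d * f) := by
        calc τ t = d * (t₁ * e') := hτt
          _ = d * (τ t₁ * f) := by rw [hf]
          _ = d * τ t₁ * f := (mul_assoc ..).symm
          _ = τ t * d * f := by rw [hS3]
          _ = τ t * (d * f) := mul_assoc ..
      have hdf : d * f = 1 :=
        GS.cancel_left (τ t) (d * f) 1 (by rw [mul_one]; exact hkey.symm)
      exact hd1 (mul_one_eq GS hdf).1

lemma lcm_tau {s t : M} (hs : MonAtom s) (ht : MonAtom t) (hne : τ s ≠ τ t) :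
    GS.lcmL (τ s) (τ t) = τ s * τ t := by
  obtain ⟨x, hx⟩ := GS.lcmL_left (τ s) (τ t)   -- lcm = τ s * x
  have hxqc : QuasiCentral x :=
    qcL GS (hτqc s) (qc_lcm GS (hτqc s) (hτqc t)) hx
  have hdvd : LeftDvd (GS.lcmL (τ s) (τ t)) (τ s * τ t) := by
    apply GS.lcmL_min
    · exact ⟨τ t, rfl⟩
    · exact (hτqc t (τ s * τ t)).2 ⟨τ s, rfl⟩
  obtain ⟨u, hu⟩ := hdvd   -- τ s * τ t = lcm * u
  have hxb : LeftDvd x (τ t) := by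
    refine ⟨u, GS.cancel_left (τ s) _ _ ?_⟩
    rw [← mul_assoc, ← hx]
    exact hu
  by_cases hx1 : x = 1
  · exfalso
    apply hne
    obtain ⟨y, hy⟩ := GS.lcmL_right (τ s) (τ t)   -- lcm = τ t * y
    have hba : LeftDvd (τ t) (τ s) := ⟨y, by rw [← hy, hx, hx1, mul_one]⟩
    exact (tau_atom_min GS τ hτqc hτdvd hτmin hs (hτqc t)
      (tau_ne_one GS τ hτqc hτdvd hτmin ht.1) hba).symm
  · have := tau_atom_min GS τ hτqc hτdvd hτmin ht hxqc hx1 hxb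
    rw [hx, this]

lemma tau_comm {s t : M} (hs : MonAtom s) (ht : MonAtom t) :
    τ s * τ t = τ t * τ s := by
  by_cases heq : τ s = τ t
  · rw [heq]
  · have h1 := lcm_tau GS τ hτqc hτdvd hτmin hs ht heq
    have h2 := lcm_tau GS τ hτqc hτdvd hτmin ht hs (fun e => heq e.symm)
    have hcomm : GS.lcmL (τ s) (τ t) = GS.lcmL (τ t) (τ s) := by
      apply leftdvd_antisymm GS
      · exact GS.lcmL_min _ _ _ (GS.lcmL_right (τ t) (τ s)) (GS.lcmL_left (τ t) (τ s))
      · exact GS.lcmL_min _ _ _ (GS.lcmL_right (τ s) (τ t)) (GS.lcmL_left (τ s) (τ t))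
    rw [← h1, ← h2]
    exact hcomm

lemma tau_prime {s t c : M} (hs : MonAtom s) (ht : MonAtom t) (hc : QuasiCentral c)
    (hd : LeftDvd (τ s) (τ t * c)) : τ s = τ t ∨ LeftDvd (τ s) c := by
  by_cases heq : τ s = τ t
  · exact Or.inl heq
  · right
    have hL : GS.lcmL (τ t) (τ s) = τ t * τ s :=
      lcm_tau GS τ hτqc hτdvd hτmin ht hs (fun e => heq e.symm)
    obtain ⟨r, hr⟩ := GS.lcmL_min (τ t) (τ s) (τ t * c) ⟨c, rfl⟩ hd
    rw [hL] at hr   -- τ t * c = τ t * τ s * r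
    refine ⟨r, GS.cancel_left (τ t) _ _ ?_⟩
    rw [← mul_assoc]
    exact hr

omit GS hτqc hτdvd hτmin in
lemma qc_list_prod {L : List M} (h : ∀ x ∈ L, QuasiCentral x) : QuasiCentral L.prod := by
  induction L with
  | nil => simpa using (qc_one (M := M))
  | cons a l ih =>
    rw [List.prod_cons]
    exact qc_mul (h a (List.mem_cons_self)) (ih fun x hx => h x (List.mem_cons_of_mem a hx))

lemma exists_decomp : ∀ g : M, QuasiCentral g →
    ∃ L : List M, (∀ x ∈ L, ∃ s, MonAtom s ∧ x = τ s) ∧ g = L.prod := by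
  intro g
  refine WellFounded.induction GS.wf (C := fun g => QuasiCentral g →
    ∃ L : List M, (∀ x ∈ L, ∃ s, MonAtom s ∧ x = τ s) ∧ g = L.prod) g ?_
  intro g ih hg
  by_cases hg1 : g = 1
  · exact ⟨[], by simp, by simp [hg1]⟩
  · obtain ⟨s, hs, hsg⟩ := exists_atom GS g hg1
    obtain ⟨g', hg'⟩ := hτmin s g hg hsg   -- g = τ s * g'
    have hg'qc : QuasiCentral g' := qcL GS (hτqc s) hg hg'
    have hne : g' ≠ g := by
      intro h
      rw [h] at hg'
      exact tau_ne_one GS τ hτqc hτdvd hτmin hs.1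
        (GS.cancel_right g (τ s) 1 (by rw [one_mul]; exact hg'.symm))
    obtain ⟨L', hL'mem, hL'prod⟩ :=
      ih g' ⟨⟨τ s, 1, by rw [mul_one]; exact hg'⟩, hne⟩ hg'qc
    refine ⟨τ s :: L', ?_, ?_⟩
    · intro x hx
      rcases List.mem_cons.1 hx with h | h
      · exact ⟨s, hs, h⟩
      · exact hL'mem x h
    · rw [List.prod_cons, ← hL'prod]
      exact hg'

omit GS hτqc hτdvd hτmin in
lemma prod_comm_of {x : M} {L : List M} (h : ∀ y ∈ L, x * y = y * x) :
    x * L.prod = L.prod * x := by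
  induction L with
  | nil => simp
  | cons b l ih =>
    rw [List.prod_cons, ← mul_assoc, h b (List.mem_cons_self), mul_assoc,
      ih fun y hy => h y (List.mem_cons_of_mem b hy), ← mul_assoc]

omit GS hτqc hτdvd hτmin in
lemma prods_comm {L1 L2 : List M} (h : ∀ x ∈ L1, ∀ y ∈ L2, x * y = y * x) :
    L1.prod * L2.prod = L2.prod * L1.prod := by
  induction L1 with
  | nil => simp
  | cons a l ih =>
    rw [List.prod_cons, mul_assoc,
      ih fun x hx y hy => h x (List.mem_cons_of_mem a hx) y hy,
      ← mul_assoc, prod_comm_of fun y hy => h a (List.mem_cons_self) y hy, mul_assoc]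

lemma mem_of_dvd_prod : ∀ L : List M, (∀ x ∈ L, ∃ s, MonAtom s ∧ x = τ s) →
    ∀ s : M, MonAtom s → LeftDvd (τ s) L.prod → τ s ∈ L := by
  intro L
  induction L with
  | nil =>
    intro _ s hs hdvd
    exfalso
    obtain ⟨c, hc⟩ := hdvd
    simp only [List.prod_nil] at hc
    exact tau_ne_one GS τ hτqc hτdvd hτmin hs.1 (mul_one_eq GS hc.symm).1
  | cons b l ih =>
    intro hmem s hs hdvd
    obtain ⟨t, ht, hbt⟩ := hmem b (List.mem_cons_self)
    have hlqc : QuasiCentral l.prod := by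
      apply qc_list_prod
      intro x hx
      obtain ⟨u, hu, hxu⟩ := hmem x (List.mem_cons_of_mem b hx)
      rw [hxu]; exact hτqc u
    rw [List.prod_cons, hbt] at hdvd
    rcases tau_prime GS τ hτqc hτdvd hτmin hs ht hlqc hdvd with h | h
    · rw [h, ← hbt]
      exact (List.mem_cons_self)
    · exact List.mem_cons_of_mem b
        (ih (fun x hx => hmem x (List.mem_cons_of_mem b hx)) s hs h)

lemma perm_decomp : ∀ L₁ L₂ : List M,
    (∀ x ∈ L₁, ∃ s, MonAtom s ∧ x = τ s) →
    (∀ x ∈ L₂, ∃ s, MonAtom s ∧ x = τ s) →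
    L₁.prod = L₂.prod → L₁.Perm L₂ := by
  intro L₁
  induction L₁ with
  | nil =>
    intro L₂ _ h2 hprod
    cases L₂ with
    | nil => exact List.Perm.refl _
    | cons b l =>
      exfalso
      obtain ⟨t, ht, hbt⟩ := h2 b (List.mem_cons_self)
      simp only [List.prod_nil, List.prod_cons] at hprod
      refine tau_ne_one GS τ hτqc hτdvd hτmin ht.1 ?_
      rw [← hbt]
      exact (mul_one_eq GS hprod.symm).1
  | cons a l₁ ih =>
    intro L₂ h1 h2 hprod
    classical
    obtain ⟨s, hs, has⟩ := h1 a (List.mem_cons_self)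
    have hdvd : LeftDvd (τ s) L₂.prod :=
      ⟨l₁.prod, by rw [← hprod, List.prod_cons, has]⟩
    have hmem : τ s ∈ L₂ := mem_of_dvd_prod GS τ hτqc hτdvd hτmin L₂ h2 s hs hdvd
    have hperm2 : L₂.Perm (τ s :: L₂.erase (τ s)) := List.perm_cons_erase hmem
    have hcomm : L₂.Pairwise Commute := by
      have hall : ∀ x ∈ L₂, ∀ y ∈ L₂, Commute x y := by
        intro x hx y hy
        obtain ⟨u, hu, hxu⟩ := h2 x hx
        obtain ⟨v, hv, hyv⟩ := h2 y hy
        rw [hxu, hyv]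
        exact tau_comm GS τ hτqc hτdvd hτmin hu hv
      clear hperm2 hmem hdvd h2 hprod
      induction L₂ with
      | nil => exact List.Pairwise.nil
      | cons b l ihl =>
        refine List.Pairwise.cons (fun y hy => hall b (List.mem_cons_self) y
          (List.mem_cons_of_mem b hy)) (ihl ?_)
        intro x hx y hy
        exact hall x (List.mem_cons_of_mem b hx) y (List.mem_cons_of_mem b hy)
    have hprod2 : L₂.prod = τ s * (L₂.erase (τ s)).prod := by
      rw [hperm2.prod_eq' hcomm, List.prod_cons]
    have hcancel : l₁.prod = (L₂.erase (τ s)).prod := by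
      apply GS.cancel_left (τ s)
      rw [← hprod2, ← hprod, List.prod_cons, has]
    have hperm1 : l₁.Perm (L₂.erase (τ s)) :=
      ih (L₂.erase (τ s)) (fun x hx => h1 x (List.mem_cons_of_mem a hx))
        (fun x hx => h2 x (List.mem_of_mem_erase hx)) hcancel
    have : (a :: l₁).Perm (τ s :: L₂.erase (τ s)) := by
      rw [has]
      exact hperm1.cons (τ s)
    exact this.trans hperm2.symm

end Tau

end Stmt8Aux

/-- in a Garside monoid, the quasi-centralizer is a free
commutative monoid with free basis the set `{τ_s : s an atom}` (repetitions
removed): quasi-central elements commute, and every quasi-central element is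
a product of elements `τ_s`, uniquely up to permutation. -/
theorem stmt_8 (M : Type*) [Monoid M] (GS : GarsideStruct M)
    (τ : M → M)
    (hτqc : ∀ g, QuasiCentral (τ g))
    (hτdvd : ∀ g, LeftDvd g (τ g))
    (hτmin : ∀ g h, QuasiCentral h → LeftDvd g h → LeftDvd (τ g) h) :
    (∀ a b : M, QuasiCentral a → QuasiCentral b → a * b = b * a) ∧
    ∀ g : M, QuasiCentral g →
      (∃ L : List M, (∀ x ∈ L, ∃ s, MonAtom s ∧ x = τ s) ∧ g = L.prod) ∧
      (∀ L₁ L₂ : List M,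
        (∀ x ∈ L₁, ∃ s, MonAtom s ∧ x = τ s) →
        (∀ x ∈ L₂, ∃ s, MonAtom s ∧ x = τ s) →
        g = L₁.prod → g = L₂.prod → L₁.Perm L₂) := by
  constructor
  · intro a b ha hb
    obtain ⟨La, hLa, hpa⟩ := Stmt8Aux.exists_decomp GS τ hτqc hτdvd hτmin a ha
    obtain ⟨Lb, hLb, hpb⟩ := Stmt8Aux.exists_decomp GS τ hτqc hτdvd hτmin b hb
    rw [hpa, hpb]
    apply Stmt8Aux.prods_comm
    intro x hx y hy
    obtain ⟨u, hu, hxu⟩ := hLa x hx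
    obtain ⟨v, hv, hyv⟩ := hLb y hy
    rw [hxu, hyv]
    exact Stmt8Aux.tau_comm GS τ hτqc hτdvd hτmin hu hv
  · intro g hg
    refine ⟨Stmt8Aux.exists_decomp GS τ hτqc hτdvd hτmin g hg, ?_⟩
    intro L₁ L₂ h1 h2 hg1 hg2
    exact Stmt8Aux.perm_decomp GS τ hτqc hτdvd hτmin L₁ L₂ h1 h2 (hg1.symm.trans hg2)
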